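/- Let X and Y be integrable real random variables with E[X] ≤ E[Y], and suppose there exists q ∈ ℝ such that almost surely either q ≤ X ≤ Y or Y ≤ X ≤ q (the disjunction holding pointwise for almost every outcome). Then E[(X−K)⁺] ≤ E[(Y−K)⁺] for every K ∈ ℝ; that is, X ≤_MC Y. -/

import Mathlib

open MeasureTheory Set

/-- **Sandwiched random variables with ordered means are ordered in the monotone
convex order.**  If `E[X] ≤ E[Y]` and there exists `q ∈ ℝ` such that almost surely
either `q ≤ X ≤ Y` or `Y ≤ X ≤ q`, then `E[(X-K)⁺] ≤ E[(Y-K)⁺]` for all `K`. -/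
theorem sandwich_implies_monotone_convex_order
    {Ω : Type*} [MeasureSpace Ω] [IsProbabilityMeasure (volume : Measure Ω)]
    (X Y : Ω → ℝ) (hX : Integrable X) (hY : Integrable Y)
    (hmean : (∫ ω, X ω) ≤ ∫ ω, Y ω)
    (q : ℝ)
    (hsandwich : ∀ᵐ ω, (q ≤ X ω ∧ X ω ≤ Y ω) ∨ (Y ω ≤ X ω ∧ X ω ≤ q)) :
    ∀ K : ℝ, ∫ ω, max (X ω - K) 0 ≤ ∫ ω, max (Y ω - K) 0 := by
  intro K
  have hX' : Integrable fun ω => X ω - K := hX.sub (integrable_const K)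
  have hY' : Integrable fun ω => Y ω - K := hY.sub (integrable_const K)
  have hXp : Integrable fun ω => max (X ω - K) 0 := hX'.pos_part
  have hYp : Integrable fun ω => max (Y ω - K) 0 := hY'.pos_part
  have hXm : Integrable fun ω => max (K - X ω) 0 := ((integrable_const K).sub hX).pos_part
  have hYm : Integrable fun ω => max (K - Y ω) 0 := ((integrable_const K).sub hY).pos_part
  by_cases hq : q ≤ K
  · refine integral_mono_ae hXp hYp ?_
    filter_upwards [hsandwich] with ω h
    rcases h with ⟨h1, h2⟩ | ⟨h1, h2⟩
    · exact max_le_max (by linarith) le_rfl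
    · rw [max_eq_right (by linarith : X ω - K ≤ 0)]
      exact le_max_right _ _
  · push_neg at hq
    have key : ∫ ω, max (K - X ω) 0 ≤ ∫ ω, max (K - Y ω) 0 := by
      refine integral_mono_ae hXm hYm ?_
      filter_upwards [hsandwich] with ω h
      rcases h with ⟨h1, h2⟩ | ⟨h1, h2⟩
      · rw [max_eq_right (by linarith : K - X ω ≤ 0)]
        exact le_max_right _ _
      · exact max_le_max (by linarith) le_rfl
    have decomp : ∀ (f : Ω → ℝ), Integrable f →
        ∫ ω, max (f ω - K) 0 = ((∫ ω, f ω) - K) + ∫ ω, max (K - f ω) 0 := by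
      intro f hf
      have hpt : ∀ ω, max (f ω - K) 0 = (f ω - K) + max (K - f ω) 0 := by
        intro ω
        rcases le_total (f ω) K with h | h
        · rw [max_eq_right (by linarith : f ω - K ≤ 0),
            max_eq_left (by linarith : (0:ℝ) ≤ K - f ω)]; ring
        · rw [max_eq_left (by linarith : (0:ℝ) ≤ f ω - K),
            max_eq_right (by linarith : K - f ω ≤ 0)]; ring
      have hf1 : Integrable (fun ω => f ω - K) := hf.sub (integrable_const K)
      have hf2 : Integrable (fun ω => max (K - f ω) 0) := ((integrable_const K).sub hf).pos_part
      simp_rw [hpt]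
      rw [integral_add hf1 hf2, integral_sub hf (integrable_const K), integral_const,
        probReal_univ]
      simp
    rw [decomp X hX, decomp Y hY]
    linarith
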